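/- arXiv:2412.02948 — 2 statements merged into one kernel-verified Lean document; each statement's English description precedes it below -/
import Mathlib

section
/- Let σ, σ̄ ∈ R^{d×d} and let Q ∈ O^d be an orthogonal matrix. Then σ̄ Q = σ̄ Q σ† σ if and only if Q(Ker σ) ⊆ Ker σ̄, where σ† is the Moore–Penrose pseudoinverse of σ. -/
open Matrix

noncomputable section

/-- for `σ, σ̄ ∈ ℝ^{d×d}`, `Q` orthogonal, and `P` the Moore–Penrose
pseudoinverse of `σ` (characterized by the four Penrose equations),
`σ̄ Q = σ̄ Q P σ` iff `Q (Ker σ) ⊆ Ker σ̄`. -/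
theorem stmt2 {d : ℕ} (σ σb Q P : Matrix (Fin d) (Fin d) ℝ)
    (hQ : Q ∈ Matrix.orthogonalGroup (Fin d) ℝ)
    (h1 : σ * P * σ = σ) (h2 : P * σ * P = P)
    (h3 : (σ * P)ᵀ = σ * P) (h4 : (P * σ)ᵀ = P * σ) :
    σb * Q = σb * Q * P * σ ↔
      ∀ v : Fin d → ℝ, σ.mulVec v = 0 → σb.mulVec (Q.mulVec v) = 0 := by
  constructor
  · intro h v hv
    have : σb.mulVec (Q.mulVec v) = (σb * Q).mulVec v := mulVec_mulVec _ _ _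
    rw [this, h]
    rw [← mulVec_mulVec, hv, mulVec_zero]
  · intro h
    have key : ∀ v : Fin d → ℝ, (σb * Q).mulVec v = (σb * Q * P * σ).mulVec v := by
      intro v
      set w : Fin d → ℝ := v - (P * σ).mulVec v with hw
      have hσw : σ.mulVec w = 0 := by
        rw [hw, mulVec_sub, mulVec_mulVec]
        rw [show σ * (P * σ) = σ by rw [← mul_assoc, h1]]
        simp
      have h0 := h w hσw
      rw [mulVec_mulVec] at h0
      rw [hw, mulVec_sub, sub_eq_zero, mulVec_mulVec] at h0
      rw [h0, mul_assoc (σb * Q)]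
    ext i j
    have := congrFun (key (Pi.single j 1)) i
    simpa [mulVec_single] using this
end
end

section
/- Let η, ν be probability measures on W^d and let T : W^d → W^d be a measurable map with T_#η = ν which is a.s. bijective, i.e. there exists measurable T̂ : W^d → W^d with T̂ ∘ T = Id η-a.s. and T ∘ T̂ = Id ν-a.s. If the coupling π_T = (Id, T)_#η is bicausal, then the coupling π_{T̂} = (Id, T̂)_#ν equals R_#π_T and is also bicausal; hence T̂ is a bicausal Monge map from ν to η. -/
open MeasureTheory

noncomputable section

abbrev I01 : Type := Set.Icc (0:ℝ) 1

abbrev W (d : ℕ) : Type := C(I01, EuclideanSpace ℝ (Fin d))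

instance (d : ℕ) : MeasurableSpace (W d) := borel _
instance (d : ℕ) : BorelSpace (W d) := ⟨rfl⟩

/-- The stopped path `ω (· ∧ t)`. -/
def stopAt (d : ℕ) (t : I01) : W d → W d := fun ω =>
  ⟨fun s => ω ⟨min (s : ℝ) (t : ℝ), ⟨le_min s.2.1 t.2.1, min_le_of_left_le s.2.2⟩⟩,
    ω.continuous.comp (Continuous.subtype_mk (continuous_subtype_val.min continuous_const) _)⟩

/-- The canonical filtration `F_t = σ(ω ↦ ω(· ∧ t))` on `W d`. -/
def Ft (d : ℕ) (t : I01) : MeasurableSpace (W d) :=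
  MeasurableSpace.comap (stopAt d t) inferInstance

/-- The right-continuous version of the canonical filtration,
`H_t = ⋂_{ε>0} F_{(t+ε) ∧ 1}`. -/
def Ht (d : ℕ) (t : I01) : MeasurableSpace (W d) :=
  ⨅ (ε : ℝ) (_ : 0 < ε), Ft d (Set.projIcc 0 1 zero_le_one ((t : ℝ) + ε))

/-- The `η`-completion of a sub-σ-algebra `m` on `W d`: the σ-algebra generated by `m`
together with the `η`-null sets. -/
def cmpl (d : ℕ) (η : Measure (W d)) (m : MeasurableSpace (W d)) : MeasurableSpace (W d) :=
  m ⊔ MeasurableSpace.generateFrom {s : Set (W d) | η s = 0}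

/-- `π` is a causal coupling with first marginal `η`: some kernel `θ` disintegrates `π`
with respect to `η` and satisfies the causality condition: for all `t` and `B ∈ H_t`,
`ω ↦ θ ω B` is measurable for the `η`-completion of `H_t`. -/
def IsCausal (d : ℕ) (η : Measure (W d)) (π : Measure (W d × W d)) : Prop :=
  ∃ θ : W d → Measure (W d),
    (∀ A B : Set (W d), MeasurableSet A → MeasurableSet B →
      π (A ×ˢ B) = ∫⁻ ω in A, θ ω B ∂η) ∧
    ∀ t : I01, ∀ B : Set (W d), MeasurableSet[Ht d t] B →
      Measurable[cmpl d η (Ht d t)] (fun ω => θ ω B)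

/-- `π` is a bicausal coupling between `η` and `ν`. -/
def IsBicausal (d : ℕ) (η ν : Measure (W d)) (π : Measure (W d × W d)) : Prop :=
  IsCausal d η π ∧ IsCausal d ν (π.map Prod.swap)

/-- `π` is a coupling of `(η, ν)`. -/
def IsCoupling (d : ℕ) (η ν : Measure (W d)) (π : Measure (W d × W d)) : Prop :=
  π.map Prod.fst = η ∧ π.map Prod.snd = ν

/-- if `T` pushes `η` to `ν`, is a.s. bijective with a.s. inverse `T̂`, and the
Monge coupling `π_T = (Id, T)_# η` is bicausal, then `π_{T̂} = (Id, T̂)_# ν` equals the swap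
of `π_T` and is bicausal; hence `T̂` is a bicausal Monge map from `ν` to `η`. -/
theorem stmt13 {d : ℕ} (η ν : Measure (W d)) [IsProbabilityMeasure η] [IsProbabilityMeasure ν]
    (T That : W d → W d) (hT : Measurable T) (hThat : Measurable That)
    (hpush : η.map T = ν)
    (hinv1 : ∀ᵐ ω ∂η, That (T ω) = ω) (hinv2 : ∀ᵐ ω ∂ν, T (That ω) = ω)
    (hbc : IsBicausal d η ν (η.map (fun ω => (ω, T ω)))) :
    ν.map (fun ω => (ω, That ω)) = (η.map (fun ω => (ω, T ω))).map Prod.swap ∧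
    IsBicausal d ν η (ν.map (fun ω => (ω, That ω))) := by
  have heq : ν.map (fun ω => (ω, That ω)) = (η.map (fun ω => (ω, T ω))).map Prod.swap := by
    rw [← hpush, Measure.map_map (show Measurable fun ω : W d => (ω, That ω) from measurable_id.prodMk hThat) hT,
      Measure.map_map measurable_swap (show Measurable fun ω : W d => (ω, T ω) from measurable_id.prodMk hT)]
    exact Measure.map_congr (hinv1.mono fun ω h => by simp [Function.comp, h])
  refine ⟨heq, heq ▸ hbc.2, ?_⟩
  rw [heq, Measure.map_map measurable_swap measurable_swap]
  simpa [Prod.swap_swap_eq, Measure.map_id] using hbc.1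
end
end
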